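/- arXiv:1512.03500 — 3 statements merged into one kernel-verified Lean document; each statement's English description precedes it below -/
import Mathlib

section
/- Let N₁,…,N_b be p×p real positive definite matrices and let G be the bp×bp block matrix whose (i,j) block (each block p×p) equals Σ_{k=max(i,j)}^{b} N_k. Then G is invertible and G^{-1} is the block tridiagonal matrix with diagonal blocks (G^{-1})_{1,1} = N₁^{-1} and (G^{-1})_{i,i} = N_{i−1}^{-1} + N_i^{-1} for i = 2,…,b, off-diagonal blocks (G^{-1})_{i,i+1} = (G^{-1})_{i+1,i} = −N_i^{-1} for i = 1,…,b−1, and all other blocks zero. -/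
open Matrix

section Aux
variable {b p : ℕ} (N : Fin b → Matrix (Fin p) (Fin p) ℝ)

def Scum (m : ℕ) : Matrix (Fin p) (Fin p) ℝ :=
  ∑ k ∈ Finset.univ.filter (fun k : Fin b => m ≤ (k : ℕ)), N k

lemma Scum_top {m : ℕ} (h : b ≤ m) : Scum N m = 0 := by
  unfold Scum
  have : Finset.univ.filter (fun k : Fin b => m ≤ (k : ℕ)) = ∅ := by
    ext k
    simp only [Finset.mem_filter, Finset.mem_univ, true_and, Finset.notMem_empty, iff_false]
    have := k.isLt; omega
  rw [this, Finset.sum_empty]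

lemma Scum_step {m : ℕ} (h : m < b) : Scum N m = N ⟨m, h⟩ + Scum N (m + 1) := by
  unfold Scum
  rw [Finset.sum_filter, Finset.sum_filter]
  have h1 : N ⟨m, h⟩ = ∑ k : Fin b, if k = ⟨m, h⟩ then N k else 0 := by
    rw [Finset.sum_ite_eq' Finset.univ ⟨m, h⟩ N]
    simp
  rw [h1, ← Finset.sum_add_distrib]
  apply Finset.sum_congr rfl
  intro k _
  by_cases hk : (k : ℕ) = m
  · have : k = ⟨m, h⟩ := Fin.ext hk
    simp [this]
  · have hne : k ≠ ⟨m, h⟩ := by simp [Fin.ext_iff, hk]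
    rw [if_neg hne, zero_add]
    by_cases h2 : m ≤ (k : ℕ)
    · rw [if_pos h2, if_pos (by omega)]
    · rw [if_neg h2, if_neg (by omega)]


lemma Tblk_aux (k : Fin b) : (k : ℕ) - 1 < b := by have := k.isLt; omega

noncomputable def Tblk (k j : Fin b) : Matrix (Fin p) (Fin p) ℝ :=
  if k = j then
    (if _ : (k : ℕ) = 0 then (N k)⁻¹
     else (N ⟨(k : ℕ) - 1, Tblk_aux k⟩)⁻¹ + (N k)⁻¹)
  else if (j : ℕ) = (k : ℕ) + 1 then -(N k)⁻¹
  else if (k : ℕ) = (j : ℕ) + 1 then -(N j)⁻¹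
  else 0

lemma key (hN : ∀ k, (N k).PosDef) (i j : Fin b) :
    ∑ k : Fin b, Scum N (max (i : ℕ) (k : ℕ)) * Tblk N k j
      = if i = j then 1 else 0 := by
  have hinv : ∀ k : Fin b, N k * (N k)⁻¹ = 1 := fun k =>
    (N k).mul_nonsing_inv (isUnit_iff_ne_zero.mpr (hN k).det_pos.ne')
  have hsplit : ∀ k : Fin b, Scum N (max (i : ℕ) (k : ℕ)) * Tblk N k j
      = (if k = j then Scum N (max (i : ℕ) (j : ℕ)) * Tblk N j j else 0)
      + (if (j : ℕ) = (k : ℕ) + 1 then Scum N (max (i : ℕ) (k : ℕ)) * -(N k)⁻¹ else 0)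
      + (if (k : ℕ) = (j : ℕ) + 1 then Scum N (max (i : ℕ) (k : ℕ)) * -(N j)⁻¹ else 0) := by
    intro k
    by_cases h1 : k = j
    · subst h1
      have c2 : ¬((k : ℕ) = (k : ℕ) + 1) := by omega
      rw [if_pos rfl, if_neg c2, add_zero, add_zero]
    · rw [if_neg h1]
      unfold Tblk
      rw [if_neg h1]
      by_cases h2 : (j : ℕ) = (k : ℕ) + 1
      · have c3 : ¬((k : ℕ) = (j : ℕ) + 1) := by omega
        rw [if_pos h2, if_neg c3, zero_add, add_zero]
        rw [if_pos h2]
      · rw [if_neg h2, zero_add]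
        by_cases h3 : (k : ℕ) = (j : ℕ) + 1
        · rw [if_pos h3, if_pos h3, if_neg h2, zero_add]
        · rw [if_neg h3, if_neg h3, if_neg h2, mul_zero, zero_add]
  rw [Finset.sum_congr rfl (fun k _ => hsplit k), Finset.sum_add_distrib,
    Finset.sum_add_distrib]
  have hsum1 : (∑ k : Fin b, if k = j then Scum N (max (i:ℕ) (j:ℕ)) * Tblk N j j else 0)
      = Scum N (max (i:ℕ) (j:ℕ)) * Tblk N j j := by
    rw [Finset.sum_ite_eq' Finset.univ j]
    simp
  have hsum3 : (∑ k : Fin b, if (k:ℕ) = (j:ℕ) + 1 then Scum N (max (i:ℕ) (k:ℕ)) * -(N j)⁻¹ else 0)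
      = Scum N (max (i:ℕ) ((j:ℕ) + 1)) * -(N j)⁻¹ := by
    by_cases hjb : (j:ℕ) + 1 < b
    · rw [Finset.sum_eq_single_of_mem (⟨(j:ℕ)+1, hjb⟩ : Fin b) (Finset.mem_univ _)]
      · rw [if_pos rfl]
      · intro k _ hk
        rw [if_neg]
        intro hc
        exact hk (Fin.ext hc)
    · have hz : Scum N (max (i:ℕ) ((j:ℕ)+1)) = 0 :=
        Scum_top N (by have := i.isLt; omega)
      rw [hz, zero_mul]
      apply Finset.sum_eq_zero
      intro k _
      rw [if_neg]
      have := k.isLt; omega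
  rw [hsum1, hsum3]
  by_cases hj0 : (j:ℕ) = 0
  · -- j = 0 case
    have hs2 : (∑ k : Fin b, if (j:ℕ) = (k:ℕ)+1 then Scum N (max (i:ℕ) (k:ℕ)) * -(N k)⁻¹ else 0) = 0 := by
      apply Finset.sum_eq_zero
      intro k _
      rw [if_neg]; omega
    have hTd : Tblk N j j = (N j)⁻¹ := by
      unfold Tblk
      rw [if_pos rfl, dif_pos hj0]
    rw [hs2, hTd, add_zero]
    by_cases hij : i = j
    · subst hij
      rw [if_pos rfl]
      have hm1 : max (i:ℕ) (i:ℕ) = (i:ℕ) := max_self _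
      have hm2 : max (i:ℕ) ((i:ℕ)+1) = (i:ℕ)+1 := by omega
      rw [hm1, hm2, hj0, Scum_step N (show 0 < b by have := i.isLt; omega)]
      have hfin : (⟨0, show 0 < b by have := i.isLt; omega⟩ : Fin b) = i := Fin.ext (by simpa using hj0.symm)
      rw [hfin, zero_add, add_mul, mul_neg, hinv i]
      abel
    · rw [if_neg hij]
      have hiv : (i:ℕ) ≠ (j:ℕ) := fun h => hij (Fin.ext h)
      have hm1 : max (i:ℕ) (j:ℕ) = (i:ℕ) := by omega
      have hm2 : max (i:ℕ) ((j:ℕ)+1) = (i:ℕ) := by omega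
      rw [hm1, hm2, mul_neg]
      abel
  · -- j ≥ 1 case
    have hj1 : 0 < (j:ℕ) := by omega
    have hjm1lt : (j:ℕ) - 1 < b := by have := j.isLt; omega
    set jm1 : Fin b := ⟨(j:ℕ) - 1, hjm1lt⟩ with hjm1
    have hs2 : (∑ k : Fin b, if (j:ℕ) = (k:ℕ)+1 then Scum N (max (i:ℕ) (k:ℕ)) * -(N k)⁻¹ else 0)
        = Scum N (max (i:ℕ) ((j:ℕ)-1)) * -(N jm1)⁻¹ := by
      rw [Finset.sum_eq_single_of_mem jm1 (Finset.mem_univ _)]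
      · rw [if_pos (by simp only [hjm1]; omega)]
      · intro k _ hk
        rw [if_neg]
        intro hc
        exact hk (Fin.ext (by simp only [hjm1]; omega))
    have hTd : Tblk N j j = (N jm1)⁻¹ + (N j)⁻¹ := by
      unfold Tblk
      rw [if_pos rfl, dif_neg hj0]
    rw [hs2, hTd]
    have hstepjm1 : Scum N ((j:ℕ) - 1) = N jm1 + Scum N (j:ℕ) := by
      have := Scum_step N hjm1lt
      rwa [show (j:ℕ) - 1 + 1 = (j:ℕ) by omega] at this
    have hstepj : Scum N (j:ℕ) = N j + Scum N ((j:ℕ)+1) := by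
      have := Scum_step N j.isLt
      rwa [show (⟨(j:ℕ), j.isLt⟩ : Fin b) = j from Fin.ext rfl] at this
    rcases Nat.lt_trichotomy (i:ℕ) (j:ℕ) with hlt | heq | hgt
    · have hij : i ≠ j := fun h => by rw [h] at hlt; omega
      rw [if_neg hij]
      rw [show max (i:ℕ) (j:ℕ) = (j:ℕ) by omega,
          show max (i:ℕ) ((j:ℕ)-1) = (j:ℕ)-1 by omega,
          show max (i:ℕ) ((j:ℕ)+1) = (j:ℕ)+1 by omega,
          hstepjm1, hstepj]
      simp only [add_mul, mul_add, mul_neg, neg_mul]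
      rw [hinv jm1, hinv j]
      abel
    · have hij : i = j := Fin.ext heq
      subst hij
      rw [if_pos rfl]
      rw [show max (i:ℕ) (i:ℕ) = (i:ℕ) by omega,
          show max (i:ℕ) ((i:ℕ)-1) = (i:ℕ) by omega,
          show max (i:ℕ) ((i:ℕ)+1) = (i:ℕ)+1 by omega,
          hstepj]
      simp only [add_mul, mul_add, mul_neg, neg_mul]
      rw [hinv i]
      abel
    · have hij : i ≠ j := fun h => by rw [h] at hgt; omega
      rw [if_neg hij]
      rw [show max (i:ℕ) (j:ℕ) = (i:ℕ) by omega,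
          show max (i:ℕ) ((j:ℕ)-1) = (i:ℕ) by omega,
          show max (i:ℕ) ((j:ℕ)+1) = (i:ℕ) by omega]
      simp only [mul_add, mul_neg]
      abel
end Aux


/-- Let `N₁,…,N_b` be `p×p` positive definite matrices and let `G`
be the `bp×bp` block matrix whose `(i,j)` block equals `Σ_{k ≥ max(i,j)} N_k`.
Then `G` is invertible and `G⁻¹` is block tridiagonal with diagonal blocks
`N₁⁻¹` and `N_{i−1}⁻¹ + N_i⁻¹` (`i ≥ 2`), off-diagonal blocks `−N_i⁻¹`, and all
other blocks zero. -/
theorem cumulative_block_gram_inverse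
    {b p : ℕ} (N : Fin b → Matrix (Fin p) (Fin p) ℝ)
    (hN : ∀ k, (N k).PosDef)
    (G : Matrix (Fin b × Fin p) (Fin b × Fin p) ℝ)
    (hG : ∀ (i j : Fin b) (r c : Fin p),
      G (i, r) (j, c)
        = (∑ k ∈ Finset.univ.filter (fun k : Fin b => max i j ≤ k), N k) r c)
    (T : Matrix (Fin b × Fin p) (Fin b × Fin p) ℝ)
    (hT : ∀ (i j : Fin b) (r c : Fin p),
      T (i, r) (j, c)
        = if i = j then
            (if h : (i : ℕ) = 0 then (N i)⁻¹ r c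
             else ((N ⟨(i : ℕ) - 1, by have := i.isLt; omega⟩)⁻¹ + (N i)⁻¹) r c)
          else if (j : ℕ) = (i : ℕ) + 1 then (-(N i)⁻¹) r c
          else if (i : ℕ) = (j : ℕ) + 1 then (-(N j)⁻¹) r c
          else 0) :
    IsUnit G.det ∧ G⁻¹ = T := by
  have hGe : ∀ (i k : Fin b) (r s : Fin p),
      G (i, r) (k, s) = Scum N (max (i : ℕ) (k : ℕ)) r s := by
    intro i k r s
    have hset : Finset.univ.filter (fun κ : Fin b => max i k ≤ κ)
        = Finset.univ.filter (fun κ : Fin b => max (i : ℕ) (k : ℕ) ≤ (κ : ℕ)) := by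
      apply Finset.filter_congr
      intro κ _
      simp only [max_le_iff, Fin.le_def]
    rw [hG]
    unfold Scum
    rw [hset]
  have hTe : ∀ (k j : Fin b) (s c : Fin p),
      T (k, s) (j, c) = Tblk N k j s c := by
    intro k j s c
    rw [hT]
    unfold Tblk
    split_ifs <;> rfl
  have hmul : G * T = 1 := by
    ext x y
    obtain ⟨i, r⟩ := x
    obtain ⟨j, c⟩ := y
    rw [Matrix.mul_apply, Fintype.sum_prod_type]
    have step1 : ∀ k : Fin b, (∑ s : Fin p, G (i, r) (k, s) * T (k, s) (j, c))
        = (Scum N (max (i : ℕ) (k : ℕ)) * Tblk N k j) r c := by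
      intro k
      rw [Matrix.mul_apply]
      exact Finset.sum_congr rfl fun s _ => by rw [hGe, hTe]
    rw [Finset.sum_congr rfl fun k _ => step1 k]
    rw [show (∑ k : Fin b, (Scum N (max (i:ℕ) (k:ℕ)) * Tblk N k j) r c)
        = (∑ k : Fin b, Scum N (max (i:ℕ) (k:ℕ)) * Tblk N k j) r c by
      rw [Matrix.sum_apply]]
    rw [key N hN i j]
    by_cases hij : i = j
    · subst hij
      rw [if_pos rfl, Matrix.one_apply, Matrix.one_apply]
      by_cases hrc : r = c
      · rw [if_pos hrc, if_pos (by rw [hrc])]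
      · rw [if_neg hrc, if_neg (by simp [Prod.ext_iff, hrc])]
    · rw [if_neg hij, Matrix.one_apply_ne (by simp [Prod.ext_iff, hij]), Matrix.zero_apply]
  exact ⟨Matrix.isUnit_det_of_right_inverse hmul, Matrix.inv_eq_right_inv hmul⟩
end

section
/- Let X₁,…,X_b be real matrices, X_i of size n_i × p, such that each Gram matrix X_i'X_i is invertible, and let y_i ∈ ℝ^{n_i} for i = 1,…,b. Let 𝒳 be the (Σn_i) × (bp) stacked design whose j-th column block (j = 1,…,b) has rows equal to zero for row blocks 1,…,j−1 and equal to X_k for row blocks k = j,…,b, and let y stack y₁,…,y_b. Then 𝒳'𝒳 is invertible, and the ordinary least squares coefficient θ̂ = (𝒳'𝒳)^{-1}𝒳'y has block components θ̂₁ = (X₁'X₁)^{-1}X₁'y₁ and θ̂_i = (X_i'X_i)^{-1}X_i'y_i − (X_{i−1}'X_{i−1})^{-1}X_{i−1}'y_{i−1} for i = 2,…,b. -/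
open Matrix Kronecker Finset

/-- Block structure of the OLS coefficient for the stacked
cumulative design.  With `X₁,…,X_b` (of sizes `n_i × p`) having invertible Gram
matrices and responses `y₁,…,y_b`, let `𝒳` be the stacked design whose `(k,j)`
row-by-column block is `X_k` if `k ≥ j` and `0` otherwise, and let `y` stack the
`y_i`.  Then `𝒳'𝒳` is invertible and `θ̂ = (𝒳'𝒳)⁻¹𝒳'y` has block components
`θ̂₁ = (X₁'X₁)⁻¹X₁'y₁` and
`θ̂ᵢ = (Xᵢ'Xᵢ)⁻¹Xᵢ'yᵢ − (Xᵢ₋₁'Xᵢ₋₁)⁻¹Xᵢ₋₁'yᵢ₋₁` for `i ≥ 2`. -/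
theorem stacked_cumulative_design_ols
    {b p : ℕ} (n : Fin b → ℕ)
    (X : ∀ i : Fin b, Matrix (Fin (n i)) (Fin p) ℝ)
    (hX : ∀ i, IsUnit ((X i)ᵀ * X i).det)
    (y : ∀ i : Fin b, Fin (n i) → ℝ)
    (D : Matrix ((k : Fin b) × Fin (n k)) (Fin b × Fin p) ℝ)
    (hD : ∀ (k : Fin b) (r : Fin (n k)) (j : Fin b) (c : Fin p),
      D ⟨k, r⟩ (j, c) = if j ≤ k then X k r c else 0)
    (Y : ((k : Fin b) × Fin (n k)) → ℝ)
    (hY : ∀ (k : Fin b) (r : Fin (n k)), Y ⟨k, r⟩ = y k r)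
    (θhat : Fin b × Fin p → ℝ)
    (hθ : θhat = ((Dᵀ * D)⁻¹ * Dᵀ).mulVec Y) :
    IsUnit (Dᵀ * D).det ∧
    (∀ (i : Fin b) (c : Fin p),
      θhat (i, c)
        = if h : (i : ℕ) = 0 then
            (((X i)ᵀ * X i)⁻¹ * (X i)ᵀ).mulVec (y i) c
          else
            (((X i)ᵀ * X i)⁻¹ * (X i)ᵀ).mulVec (y i) c
              - (((X ⟨(i : ℕ) - 1, (Nat.sub_le _ _).trans_lt i.isLt⟩)ᵀ *
                    X ⟨(i : ℕ) - 1, (Nat.sub_le _ _).trans_lt i.isLt⟩)⁻¹ *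
                  (X ⟨(i : ℕ) - 1, (Nat.sub_le _ _).trans_lt i.isLt⟩)ᵀ).mulVec
                  (y ⟨(i : ℕ) - 1, (Nat.sub_le _ _).trans_lt i.isLt⟩) c) := by
  classical
  -- Gram matrices and the single-block OLS coefficients
  set βf : ∀ i : Fin b, Fin p → ℝ :=
    fun i => (((X i)ᵀ * X i)⁻¹ * (X i)ᵀ).mulVec (y i) with hβf
  have hGβ : ∀ i : Fin b, ((X i)ᵀ * X i).mulVec (βf i) = (X i)ᵀ.mulVec (y i) := by
    intro i
    rw [hβf, mulVec_mulVec, ← Matrix.mul_assoc, Matrix.mul_nonsing_inv _ (hX i),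
      Matrix.one_mul]
  -- Part 1: invertibility of the Gram matrix of the stacked design
  have hdet : IsUnit (Dᵀ * D).det := by
    set Xd : Matrix ((k : Fin b) × Fin (n k)) (Fin b × Fin p) ℝ :=
      fun q r => if q.1 = r.1 then X q.1 q.2 r.2 else 0 with hXd
    set L : Matrix (Fin b) (Fin b) ℝ := fun k j => if j ≤ k then 1 else 0 with hL
    set C : Matrix (Fin b × Fin p) (Fin b × Fin p) ℝ :=
      L ⊗ₖ (1 : Matrix (Fin p) (Fin p) ℝ) with hC
    have hDC : D = Xd * C := by
      ext ⟨k, r⟩ ⟨j, c⟩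
      rw [hD, Matrix.mul_apply, Fintype.sum_prod_type]
      simp only [hXd, hC, kroneckerMap_apply, Matrix.one_apply]
      simp only [hL]
      simp only [ite_mul, mul_ite, mul_one, mul_zero, zero_mul,
        Finset.sum_ite_eq', Finset.mem_univ, if_true]
      have key : ∀ x : Fin b,
          (if j ≤ x then if k = x then X k r c else 0 else 0)
            = if k = x then (if j ≤ k then X k r c else 0) else 0 := by
        intro x
        by_cases hx : k = x
        · subst hx; simp
        · simp [hx]
      rw [Finset.sum_congr rfl fun x _ => key x, Finset.sum_ite_eq]
      simp
    have hXdXd : Xdᵀ * Xd =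
        (blockDiagonal (fun j => (X j)ᵀ * X j)).submatrix
          (Equiv.prodComm (Fin b) (Fin p)) (Equiv.prodComm (Fin b) (Fin p)) := by
      ext ⟨j, c⟩ ⟨j', c'⟩
      rw [Matrix.mul_apply, ← Finset.univ_sigma_univ, Finset.sum_sigma]
      simp only [submatrix_apply, Equiv.prodComm_apply, Prod.swap_prod_mk,
        blockDiagonal_apply, Matrix.mul_apply, transpose_apply]
      simp only [hXd]
      by_cases h : j = j'
      · subst h
        simp
      · simp [h, Ne.symm h]
    have hCdet : C.det = 1 := by
      have hLdet : L.det = 1 := by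
        rw [Matrix.det_of_lowerTriangular L]
        · simp [hL]
        · intro i j hij
          simp only [hL]
          rw [if_neg]
          exact fun hji => absurd hji (not_le.2 hij)
      rw [hC, det_kronecker, hLdet, det_one, one_pow, one_pow, one_mul]
    have : Dᵀ * D = Cᵀ * (Xdᵀ * Xd) * C := by
      rw [hDC, transpose_mul, Matrix.mul_assoc, ← Matrix.mul_assoc Xdᵀ,
        ← Matrix.mul_assoc]
    rw [this, det_mul, det_mul, det_transpose, hCdet, hXdXd,
      det_submatrix_equiv_self, det_blockDiagonal, one_mul, mul_one]
    exact Finset.prod_induction _ IsUnit (fun _ _ => IsUnit.mul) isUnit_one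
      fun i _ => hX i
  refine ⟨hdet, ?_⟩
  -- the candidate solution
  set θ : Fin b × Fin p → ℝ := fun q =>
    if h : (q.1 : ℕ) = 0 then βf q.1 q.2
    else βf q.1 q.2 - βf ⟨(q.1 : ℕ) - 1, (Nat.sub_le _ _).trans_lt q.1.isLt⟩ q.2
    with hθdef
  -- telescoping
  set θn : ℕ → Fin p → ℝ := fun m c =>
    if h : m < b then θ (⟨m, h⟩, c) else 0 with hθn
  have key : ∀ (m : ℕ) (h : m < b) (c' : Fin p),
      (∑ t ∈ Finset.range (m + 1), θn t c') = βf ⟨m, h⟩ c' := by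
    intro m
    induction m with
    | zero =>
      intro h c'
      rw [Finset.sum_range_one]
      simp only [hθn, dif_pos h, hθdef]
      simp
    | succ m ih =>
      intro h c'
      have hm : m < b := Nat.lt_of_succ_lt h
      rw [Finset.sum_range_succ, ih hm]
      simp only [hθn, dif_pos h, hθdef]
      rw [dif_neg (by simp : ¬ ((⟨m + 1, h⟩ : Fin b) : ℕ) = 0)]
      have he : (⟨((⟨m + 1, h⟩ : Fin b) : ℕ) - 1,
          (Nat.sub_le _ _).trans_lt (⟨m + 1, h⟩ : Fin b).isLt⟩ : Fin b) = ⟨m, hm⟩ := rfl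
      rw [he]
      ring
  have htel : ∀ (k : Fin b) (c' : Fin p),
      (∑ j' : Fin b, if j' ≤ k then θ (j', c') else 0) = βf k c' := by
    intro k c'
    have step1 : (∑ j' : Fin b, if j' ≤ k then θ (j', c') else 0)
        = ∑ t ∈ Finset.range b, (if t ≤ (k : ℕ) then θn t c' else 0) := by
      rw [← Fin.sum_univ_eq_sum_range (fun m => if m ≤ (k : ℕ) then θn m c' else 0) b]
      refine Finset.sum_congr rfl fun j' _ => ?_
      simp only [hθn, dif_pos j'.isLt, Fin.eta]
      rfl
    rw [step1, ← Finset.sum_subset (Finset.range_subset_range.2 k.isLt)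
      (fun x _ hx => by rw [if_neg]; intro hle; exact hx (Finset.mem_range.2 (Nat.lt_succ_of_le hle)))]
    rw [Finset.sum_congr rfl (fun x hx => if_pos (Nat.lt_succ_iff.1 (Finset.mem_range.1 hx)))]
    rw [key (k : ℕ) k.isLt c', Fin.eta]
  -- entries of the Gram matrix of the stacked design
  have hMe : ∀ (j : Fin b) (c : Fin p) (j' : Fin b) (c' : Fin p),
      (Dᵀ * D) (j, c) (j', c')
        = ∑ k : Fin b, if j ≤ k ∧ j' ≤ k then ((X k)ᵀ * X k) c c' else 0 := by
    intro j c j' c'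
    rw [Matrix.mul_apply, ← Finset.univ_sigma_univ, Finset.sum_sigma]
    refine Finset.sum_congr rfl fun k _ => ?_
    simp only [transpose_apply, hD]
    by_cases h1 : j ≤ k <;> by_cases h2 : j' ≤ k <;>
      simp [h1, h2, Matrix.mul_apply]
  -- normal equations
  have hnorm : (Dᵀ * D).mulVec θ = Dᵀ.mulVec Y := by
    ext ⟨j, c⟩
    have hR : (Dᵀ *ᵥ Y) (j, c)
        = ∑ k : Fin b, (if j ≤ k then ((X k)ᵀ *ᵥ y k) c else 0) := by
      simp only [Matrix.mulVec, dotProduct]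
      rw [← Finset.univ_sigma_univ, Finset.sum_sigma]
      refine Finset.sum_congr rfl fun k _ => ?_
      simp only [transpose_apply, hD, hY]
      by_cases h1 : j ≤ k <;> simp [h1]
    have hL : ((Dᵀ * D) *ᵥ θ) (j, c)
        = ∑ k : Fin b, (if j ≤ k then ((X k)ᵀ *ᵥ y k) c else 0) := by
      simp only [Matrix.mulVec, dotProduct]
      rw [Fintype.sum_prod_type]
      calc ∑ j' : Fin b, ∑ c' : Fin p, (Dᵀ * D) (j, c) (j', c') * θ (j', c')
          = ∑ j' : Fin b, ∑ c' : Fin p, ∑ k : Fin b,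
              (if j ≤ k ∧ j' ≤ k then ((X k)ᵀ * X k) c c' * θ (j', c') else 0) := by
            refine Finset.sum_congr rfl fun j' _ => Finset.sum_congr rfl fun c' _ => ?_
            rw [hMe, Finset.sum_mul]
            exact Finset.sum_congr rfl fun k _ => by rw [ite_mul, zero_mul]
        _ = ∑ k : Fin b, ∑ j' : Fin b, ∑ c' : Fin p,
              (if j ≤ k ∧ j' ≤ k then ((X k)ᵀ * X k) c c' * θ (j', c') else 0) := by
            rw [Finset.sum_congr rfl fun j' (_ : j' ∈ Finset.univ) =>
              Finset.sum_comm (f := fun c' k =>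
                if j ≤ k ∧ j' ≤ k then ((X k)ᵀ * X k) c c' * θ (j', c') else 0)]
            exact Finset.sum_comm
        _ = ∑ k : Fin b, (if j ≤ k then ((X k)ᵀ *ᵥ y k) c else 0) := by
            refine Finset.sum_congr rfl fun k _ => ?_
            by_cases h1 : j ≤ k
            · simp only [h1, true_and, if_true]
              rw [Finset.sum_comm]
              have hc : ∀ c' : Fin p,
                  (∑ j' : Fin b, if j' ≤ k then ((X k)ᵀ * X k) c c' * θ (j', c') else 0)
                    = ((X k)ᵀ * X k) c c' * βf k c' := by
                intro c'
                rw [← htel k c', Finset.mul_sum]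
                exact Finset.sum_congr rfl fun j' _ => by
                  by_cases h2 : j' ≤ k <;> simp [h2]
              rw [Finset.sum_congr rfl fun c' _ => hc c']
              exact congrFun (hGβ k) c
            · simp [h1]
    rw [hL, hR]
  have hθθ : θhat = θ := by
    rw [hθ, ← mulVec_mulVec, ← hnorm, mulVec_mulVec,
      Matrix.nonsing_inv_mul _ hdet, Matrix.one_mulVec]
  intro i c
  rw [hθθ]
end

section
/- Let λ > 0, γ > 2, and let A be a d×d real symmetric matrix whose smallest eigenvalue is strictly greater than 1/γ. Then the function f : ℝ^d → ℝ defined by f(θ) = (1/2)·θ'Aθ + Σ_{i=1}^d p^{MCP}_{λ,γ}(|θ_i|) is strictly convex on ℝ^d. -/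
open Matrix

/-- The minimax concave penalty (MCP): `p(u) = λu − u²/(2γ)` for `0 ≤ u ≤ γλ`
and `p(u) = γλ²/2` for `u > γλ`. -/
noncomputable def mcpPenalty (lam γ : ℝ) (u : ℝ) : ℝ :=
  if u ≤ γ * lam then lam * u - u ^ 2 / (2 * γ) else γ * lam ^ 2 / 2

/-- The convex companion: `ψ u = λ|u| + max(|u|-γλ,0)²/(2γ)`. -/
noncomputable def mcpPsi (lam γ : ℝ) (u : ℝ) : ℝ :=
  lam * |u| + max (|u| - γ * lam) 0 ^ 2 / (2 * γ)

lemma mcp_eq (lam γ : ℝ) (hγ : 0 < γ) (u : ℝ) :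
    mcpPenalty lam γ |u| = mcpPsi lam γ u - u ^ 2 / (2 * γ) := by
  unfold mcpPenalty mcpPsi
  by_cases h : |u| ≤ γ * lam
  · rw [if_pos h, max_eq_right (by linarith), sq_abs]
    ring
  · rw [if_neg h]
    push_neg at h
    rw [max_eq_left (by linarith)]
    have hsq : (|u| - γ * lam) ^ 2 = u ^ 2 - 2 * γ * lam * |u| + γ ^ 2 * lam ^ 2 := by
      rw [sub_sq, sq_abs]; ring
    rw [hsq]
    field_simp
    ring

lemma convexOn_mcpPsi (lam γ : ℝ) (hlam : 0 ≤ lam) (hγ : 0 < γ) :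
    ConvexOn ℝ Set.univ (mcpPsi lam γ) := by
  have habs : ConvexOn ℝ Set.univ (fun u : ℝ => |u|) := by
    exact (convexOn_univ_norm (E := ℝ))
  have h1 : ConvexOn ℝ Set.univ (fun u : ℝ => lam * |u|) := by
    simpa [smul_eq_mul] using habs.smul hlam
  have h2 : ConvexOn ℝ Set.univ (fun u : ℝ => |u| - γ * lam) := by
    simpa [sub_eq_add_neg, Pi.add_def] using habs.add_const (-(γ * lam))
  have h3 : ConvexOn ℝ Set.univ (fun u : ℝ => max (|u| - γ * lam) 0) := by
    simpa [Pi.sup_def] using h2.sup (convexOn_const (0 : ℝ) convex_univ)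
  have h4 : ConvexOn ℝ Set.univ (fun u : ℝ => max (|u| - γ * lam) 0 ^ 2) := by
    exact h3.pow (fun x _ => le_max_right _ _) 2
  have h5 : ConvexOn ℝ Set.univ (fun u : ℝ => max (|u| - γ * lam) 0 ^ 2 / (2 * γ)) := by
    have := h4.smul (c := (2 * γ)⁻¹) (by positivity)
    simpa [smul_eq_mul, div_eq_inv_mul] using this
  exact h1.add h5

lemma convexOn_finset_sum {E : Type*} [AddCommGroup E] [Module ℝ E] {ι : Type*} (t : Finset ι)
    (f : ι → E → ℝ) (h : ∀ i ∈ t, ConvexOn ℝ Set.univ (f i)) :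
    ConvexOn ℝ Set.univ (fun x => ∑ i ∈ t, f i x) := by
  classical
  induction t using Finset.induction_on with
  | empty => simpa using convexOn_const (0 : ℝ) convex_univ
  | insert _ _ hx ih =>
    simp only [Finset.sum_insert hx]
    exact (h _ (Finset.mem_insert_self _ _)).add
      (ih fun i hi => h i (Finset.mem_insert_of_mem hi))

lemma dot_symm {d : ℕ} {A : Matrix (Fin d) (Fin d) ℝ} (hA : A.IsHermitian)
    (x y : Fin d → ℝ) : x ⬝ᵥ A *ᵥ y = y ⬝ᵥ A *ᵥ x := by
  have hAt : Aᵀ = A := by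
    ext i j
    rw [Matrix.transpose_apply]
    conv_rhs => rw [← hA]
    simp [Matrix.conjTranspose_apply]
  rw [dotProduct_mulVec, ← Matrix.mulVec_transpose, hAt, dotProduct_comm]

lemma quad_gt {d : ℕ} {A : Matrix (Fin d) (Fin d) ℝ} (hA : A.IsHermitian)
    {c : ℝ} (hc : ∀ i, c < hA.eigenvalues i) {v : Fin d → ℝ} (hv : v ≠ 0) :
    c * (v ⬝ᵥ v) < v ⬝ᵥ A *ᵥ v := by
  classical
  set U : Matrix (Fin d) (Fin d) ℝ := (hA.eigenvectorUnitary : Matrix (Fin d) (Fin d) ℝ) with hU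
  have hU1 : U * star U = 1 := Matrix.mem_unitaryGroup_iff.mp hA.eigenvectorUnitary.2
  have hU2 : star U * U = 1 := Matrix.mem_unitaryGroup_iff'.mp hA.eigenvectorUnitary.2
  set w : Fin d → ℝ := star U *ᵥ v with hw
  have hvw : U *ᵥ w = v := by
    rw [hw, Matrix.mulVec_mulVec, hU1, Matrix.one_mulVec]
  have hdot : ∀ z : Fin d → ℝ, v ⬝ᵥ U *ᵥ z = w ⬝ᵥ z := by
    intro z
    rw [dotProduct_mulVec]
    congr 1
    rw [hw]
    have : star U = Uᵀ := by
      ext i j; simp [Matrix.star_apply]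
    rw [this, Matrix.mulVec_transpose]
  have key : v ⬝ᵥ A *ᵥ v = ∑ i, hA.eigenvalues i * w i ^ 2 := by
    conv_lhs => rw [hA.spectral_theorem]
    rw [Unitary.conjStarAlgAut_apply, ← Matrix.mulVec_mulVec, ← Matrix.mulVec_mulVec, hdot]
    simp [dotProduct, Matrix.mulVec_diagonal]
    apply Finset.sum_congr rfl
    intro i _
    ring
  have keyn : v ⬝ᵥ v = ∑ i, w i ^ 2 := by
    conv_lhs => rw [← hvw]
    rw [dotProduct_mulVec]
    have : (U *ᵥ w) ᵥ* U = star U *ᵥ (U *ᵥ w) := by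
      have : star U = Uᵀ := by
        ext i j; simp [Matrix.star_apply]
      rw [this, Matrix.mulVec_transpose]
    rw [this, Matrix.mulVec_mulVec, hU2, Matrix.one_mulVec]
    simp [dotProduct, sq]
  have hwne : w ≠ 0 := by
    intro h0
    apply hv
    rw [← hvw, h0, Matrix.mulVec_zero]
  obtain ⟨j, hj⟩ := Function.ne_iff.mp hwne
  rw [key, keyn, Finset.mul_sum]
  apply Finset.sum_lt_sum
  · intro i _
    exact mul_le_mul_of_nonneg_right (hc i).le (sq_nonneg _)
  · refine ⟨j, Finset.mem_univ _, ?_⟩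
    have : 0 < w j ^ 2 := pow_two_pos_of_ne_zero hj
    exact mul_lt_mul_of_pos_right (hc j) this

/-- If `λ > 0`, `γ > 2` and `A` is a `d×d` real symmetric matrix
whose smallest eigenvalue exceeds `1/γ`, then
`θ ↦ (1/2)θ'Aθ + Σᵢ p^{MCP}_{λ,γ}(|θᵢ|)` is strictly convex on `ℝ^d`. -/
theorem mcp_penalized_quadratic_strictly_convex
    (lam γ : ℝ) (hlam : 0 < lam) (hγ : 2 < γ)
    {d : ℕ} (A : Matrix (Fin d) (Fin d) ℝ)
    (hA : A.IsHermitian)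
    (heig : ∀ i, 1 / γ < hA.eigenvalues i) :
    StrictConvexOn ℝ (Set.univ : Set (Fin d → ℝ))
      (fun θ : Fin d → ℝ =>
        (1 / 2) * (θ ⬝ᵥ A.mulVec θ) + ∑ i, mcpPenalty lam γ |θ i|) := by
  have hγ0 : (0 : ℝ) < γ := by linarith
  have sq_eq : ∀ θ : Fin d → ℝ, (∑ i, (θ i) ^ 2) = θ ⬝ᵥ θ := by
    intro θ; simp [dotProduct, sq]
  -- convex part
  have hh : ConvexOn ℝ (Set.univ : Set (Fin d → ℝ))
      (fun θ => ∑ i, mcpPsi lam γ (θ i)) := by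
    apply convexOn_finset_sum
    intro i _
    have := (convexOn_mcpPsi lam γ hlam.le hγ0).comp_linearMap
      (LinearMap.proj i : (Fin d → ℝ) →ₗ[ℝ] ℝ)
    simpa [Function.comp_def] using this
  -- strictly convex part
  have hg : StrictConvexOn ℝ (Set.univ : Set (Fin d → ℝ))
      (fun θ : Fin d → ℝ => (1 / 2) * (θ ⬝ᵥ A.mulVec θ) - (∑ i, (θ i) ^ 2) / (2 * γ)) := by
    constructor
    · exact convex_univ
    · intro x _ y _ hxy a b ha hb hab
      have hb' : b = 1 - a := by linarith
      subst hb'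
      simp only [smul_eq_mul]
      have hsym : x ⬝ᵥ A *ᵥ y = y ⬝ᵥ A *ᵥ x := dot_symm hA x y
      have hQ : (a • x + (1 - a) • y) ⬝ᵥ A *ᵥ (a • x + (1 - a) • y)
          = a ^ 2 * (x ⬝ᵥ A *ᵥ x) + 2 * (a * (1 - a)) * (x ⬝ᵥ A *ᵥ y)
            + (1 - a) ^ 2 * (y ⬝ᵥ A *ᵥ y) := by
        simp only [Matrix.mulVec_add, Matrix.mulVec_smul, dotProduct_add, add_dotProduct,
          smul_dotProduct, dotProduct_smul, smul_eq_mul, hsym]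
        ring
      have hP : (a • x + (1 - a) • y) ⬝ᵥ (a • x + (1 - a) • y)
          = a ^ 2 * (x ⬝ᵥ x) + 2 * (a * (1 - a)) * (x ⬝ᵥ y)
            + (1 - a) ^ 2 * (y ⬝ᵥ y) := by
        simp only [dotProduct_add, add_dotProduct, smul_dotProduct, dotProduct_smul,
          smul_eq_mul, dotProduct_comm y x]
        ring
      set v : Fin d → ℝ := x - y with hv
      have hvne : v ≠ 0 := sub_ne_zero.mpr hxy
      have key : (1 / γ) * (v ⬝ᵥ v) < v ⬝ᵥ A *ᵥ v := quad_gt hA heig hvne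
      have hQv : v ⬝ᵥ A *ᵥ v = (x ⬝ᵥ A *ᵥ x) - 2 * (x ⬝ᵥ A *ᵥ y) + (y ⬝ᵥ A *ᵥ y) := by
        simp only [hv, Matrix.mulVec_sub, dotProduct_sub, sub_dotProduct, hsym]
        ring
      have hPv : v ⬝ᵥ v = (x ⬝ᵥ x) - 2 * (x ⬝ᵥ y) + (y ⬝ᵥ y) := by
        simp only [hv, dotProduct_sub, sub_dotProduct, dotProduct_comm y x]
        ring
      rw [hQv, hPv] at key
      rw [sq_eq, sq_eq, sq_eq, hQ, hP]
      have hab' : 0 < a * (1 - a) := mul_pos ha hb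
      have hd : 0 < (1 / 2) * ((x ⬝ᵥ A *ᵥ x) - 2 * (x ⬝ᵥ A *ᵥ y) + (y ⬝ᵥ A *ᵥ y))
          - (1 / (2 * γ)) * ((x ⬝ᵥ x) - 2 * (x ⬝ᵥ y) + (y ⬝ᵥ y)) := by
        have h1γ : (1 : ℝ) / (2 * γ) = (1 / 2) * (1 / γ) := by
          field_simp
        rw [h1γ]
        nlinarith [key]
      have hid : a * (1 / 2 * (x ⬝ᵥ A *ᵥ x) - (x ⬝ᵥ x) / (2 * γ))
            + (1 - a) * (1 / 2 * (y ⬝ᵥ A *ᵥ y) - (y ⬝ᵥ y) / (2 * γ))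
          - (1 / 2 * (a ^ 2 * (x ⬝ᵥ A *ᵥ x) + 2 * (a * (1 - a)) * (x ⬝ᵥ A *ᵥ y)
              + (1 - a) ^ 2 * (y ⬝ᵥ A *ᵥ y))
            - (a ^ 2 * (x ⬝ᵥ x) + 2 * (a * (1 - a)) * (x ⬝ᵥ y)
              + (1 - a) ^ 2 * (y ⬝ᵥ y)) / (2 * γ))
          = (a * (1 - a)) * (1 / 2 * ((x ⬝ᵥ A *ᵥ x) - 2 * (x ⬝ᵥ A *ᵥ y) + (y ⬝ᵥ A *ᵥ y))
            - 1 / (2 * γ) * ((x ⬝ᵥ x) - 2 * (x ⬝ᵥ y) + (y ⬝ᵥ y))) := by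
        ring
      nlinarith [mul_pos hab' hd, hid]
  have hfeq : (fun θ : Fin d → ℝ =>
        (1 / 2) * (θ ⬝ᵥ A.mulVec θ) + ∑ i, mcpPenalty lam γ |θ i|)
      = (fun θ : Fin d → ℝ =>
          (1 / 2) * (θ ⬝ᵥ A.mulVec θ) - (∑ i, (θ i) ^ 2) / (2 * γ))
        + (fun θ => ∑ i, mcpPsi lam γ (θ i)) := by
    funext θ
    simp only [Pi.add_apply, mcp_eq lam γ hγ0, Finset.sum_sub_distrib, Finset.sum_div]
    ring
  rw [hfeq]
  exact hg.add_convexOn hh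
end
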